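/- Let C = diag(c₁,…,c_{2n}) be a diagonal 2n×2n matrix over F whose entries satisfy c_k c_{k′} = λ for all k = 1,…,2n, for some fixed λ ≠ 0. Then the matrix C ⊗ C commutes with the R-matrix: (C ⊗ C) R = R (C ⊗ C). -/

import Mathlib

open scoped Kronecker

set_option synthInstance.maxHeartbeats 1000000
set_option maxHeartbeats 1000000

noncomputable section

namespace CI

abbrev F : Type := RatFunc ℂ

def q : F := RatFunc.X

def pr (n : ℕ) (i : Fin (2*n)) : Fin (2*n) := ⟨2*n - 1 - i.val, by have := i.isLt; omega⟩

def eps (n : ℕ) (i : Fin (2*n)) : F := if (i : ℕ) < n then 1 else -1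

def bar (n : ℕ) (i : Fin (2*n)) : ℤ :=
  if (i : ℕ) < n then (n : ℤ) - (i : ℕ) else (n : ℤ) - (i : ℕ) - 1

def E (n : ℕ) (i j : Fin (2*n)) : Matrix (Fin (2*n)) (Fin (2*n)) F :=
  Matrix.single i j 1

/-- The R-matrix of type CI, as an element of End(F^{2n}) ⊗ End(F^{2n}). -/
def Rmat (n : ℕ) : Matrix (Fin (2*n) × Fin (2*n)) (Fin (2*n) × Fin (2*n)) F :=
  (∑ i, ∑ j, q ^ ((if i = j then (1:ℤ) else 0) - (if i = pr n j then (1:ℤ) else 0)) •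
      (E n i i ⊗ₖ E n j j))
  + (q - q⁻¹) • (∑ i, ∑ j, if i < j then E n i j ⊗ₖ E n j i else 0)
  - (q - q⁻¹) • (∑ i, ∑ j, if i < j then
      (q ^ (bar n j - bar n i) * eps n i * eps n j) • (E n i j ⊗ₖ E n (pr n i) (pr n j)) else 0)


lemma kronE (n : ℕ) (i j k l : Fin (2*n)) :
    E n i j ⊗ₖ E n k l = Matrix.single (i,k) (j,l) (1:F) := by
  ext ⟨a,b⟩ ⟨x,y⟩
  simp only [E, Matrix.kroneckerMap_apply, Matrix.single, Matrix.of_apply,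
    Prod.mk.injEq]
  split_ifs <;> simp_all

lemma comm_std {I : Type*} [Fintype I] [DecidableEq I] (d : I → F) (p r : I) (v : F)
    (h : d p = d r) :
    Commute (Matrix.diagonal d) (Matrix.single p r v) := by
  show _ = _
  ext i j
  rw [Matrix.diagonal_mul, Matrix.mul_diagonal]
  simp only [Matrix.single, Matrix.of_apply]
  split_ifs with h'
  · obtain ⟨rfl, rfl⟩ := h'
    rw [h, mul_comm]
  · simp

/-- any diagonal matrix C = diag(c₁,…,c_{2n}) with c_k c_{k′} = λ ≠ 0 for
    all k satisfies (C ⊗ C) R = R (C ⊗ C). -/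
theorem diag_commutes_with_R (n : ℕ) (hn : 2 ≤ n) (c : Fin (2*n) → F) (lam : F)
    (hlam : lam ≠ 0) (hc : ∀ k, c k * c (pr n k) = lam) :
    (Matrix.diagonal c ⊗ₖ Matrix.diagonal c) * Rmat n
      = Rmat n * (Matrix.diagonal c ⊗ₖ Matrix.diagonal c) := by
  rw [Matrix.diagonal_kronecker_diagonal]
  set d : Fin (2*n) × Fin (2*n) → F := fun p => c p.1 * c p.2 with hd
  show Commute (Matrix.diagonal d) (Rmat n)
  unfold Rmat
  refine Commute.sub_right (Commute.add_right ?_ (Commute.smul_right ?_ _))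
    (Commute.smul_right ?_ _)
  · refine Commute.sum_right _ _ _ fun i _ => Commute.sum_right _ _ _ fun j _ => ?_
    exact Commute.smul_right (kronE n i i j j ▸ comm_std d (i,j) (i,j) 1 rfl) _
  · refine Commute.sum_right _ _ _ fun i _ => Commute.sum_right _ _ _ fun j _ => ?_
    split_ifs
    · exact kronE n i j j i ▸ comm_std d (i,j) (j,i) 1 (mul_comm _ _)
    · exact Commute.zero_right _
  · refine Commute.sum_right _ _ _ fun i _ => Commute.sum_right _ _ _ fun j _ => ?_
    split_ifs
    · refine Commute.smul_right (kronE n i j (pr n i) (pr n j) ▸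
        comm_std d (i, pr n i) (j, pr n j) 1 ?_) _
      show c i * c (pr n i) = c j * c (pr n j)
      rw [hc, hc]
    · exact Commute.zero_right _

end CI
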